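/- Let A, B be n×n complex matrices with (A,B) of maximal rank and Ran A ∩ Ran B = {0}. Then for every unitary U leaving Ker A and Ker B invariant there exists an invertible matrix C with AU = CA and BU = CB. -/

import Mathlib

/-- If `(A,B)` has maximal rank and `Ran A ∩ Ran B = {0}`, then every unitary `U` leaving
`Ker A` and `Ker B` invariant admits an invertible `C` with `AU = CA` and `BU = CB`. -/
theorem stmt_9 (n : ℕ) (A B : Matrix (Fin n) (Fin n) ℂ)
    (hrank : (Matrix.fromCols A B).rank = n)
    (hranges : LinearMap.range A.mulVecLin ⊓ LinearMap.range B.mulVecLin = ⊥) :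
    ∀ U ∈ Matrix.unitaryGroup (Fin n) ℂ,
      (LinearMap.ker A.mulVecLin).map U.mulVecLin ≤ LinearMap.ker A.mulVecLin →
      (LinearMap.ker B.mulVecLin).map U.mulVecLin ≤ LinearMap.ker B.mulVecLin →
      ∃ C : Matrix (Fin n) (Fin n) ℂ, IsUnit C ∧ A * U = C * A ∧ B * U = C * B := by
  intro U hU hkA hkB
  set f := A.mulVecLin with hf
  set g := B.mulVecLin with hg
  set u := U.mulVecLin with hu
  -- u is surjective
  have hUstar : U * star U = 1 := (Matrix.mem_unitaryGroup_iff).mp hU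
  have husurj : Function.Surjective u := by
    intro y
    exact ⟨(star U).mulVecLin y, by
      rw [hu, ← LinearMap.comp_apply, ← Matrix.mulVecLin_mul, hUstar, Matrix.mulVecLin_one,
        LinearMap.id_apply]⟩
  -- range of fromColumns = range f ⊔ range g
  have hsup : LinearMap.range f ⊔ LinearMap.range g = ⊤ := by
    have hr : LinearMap.range (Matrix.fromCols A B).mulVecLin
        = LinearMap.range f ⊔ LinearMap.range g := by
      apply le_antisymm
      · rintro x ⟨v, rfl⟩
        rw [show v = Sum.elim (v ∘ Sum.inl) (v ∘ Sum.inr) by ext (i|i) <;> rfl]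
        rw [Matrix.mulVecLin_apply, Matrix.fromCols_mulVec_sumElim]
        exact Submodule.add_mem_sup ⟨_, rfl⟩ ⟨_, rfl⟩
      · rw [sup_le_iff]
        constructor
        · rintro x ⟨v, rfl⟩
          exact ⟨Sum.elim v 0, by
            simp only [Matrix.mulVecLin_apply, Matrix.fromCols_mulVec_sumElim,
              Matrix.mulVec_zero, add_zero]
            rfl⟩
        · rintro x ⟨v, rfl⟩
          exact ⟨Sum.elim 0 v, by
            simp only [Matrix.mulVecLin_apply, Matrix.fromCols_mulVec_sumElim,
              Matrix.mulVec_zero, zero_add]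
            rfl⟩
    apply Submodule.eq_top_of_finrank_eq
    rw [← hr]
    have : (Matrix.fromCols A B).rank
        = Module.finrank ℂ (LinearMap.range (Matrix.fromCols A B).mulVecLin) := rfl
    rw [← this, hrank]
    simp [Module.finrank_fintype_fun_eq_card]
  have hcompl : IsCompl (LinearMap.range f) (LinearMap.range g) :=
    ⟨disjoint_iff.mpr hranges, codisjoint_iff.mpr hsup⟩
  -- kernel conditions
  have hkerA : LinearMap.ker f ≤ LinearMap.ker (f.comp u) := by
    intro x hx
    exact hkA ⟨x, hx, rfl⟩
  have hkerB : LinearMap.ker g ≤ LinearMap.ker (g.comp u) := by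
    intro x hx
    exact hkB ⟨x, hx, rfl⟩
  -- factor maps
  let h₁ : LinearMap.range f →ₗ[ℂ] (Fin n → ℂ) :=
    ((LinearMap.ker f).liftQ (f.comp u) hkerA).comp f.quotKerEquivRange.symm.toLinearMap
  let h₂ : LinearMap.range g →ₗ[ℂ] (Fin n → ℂ) :=
    ((LinearMap.ker g).liftQ (g.comp u) hkerB).comp g.quotKerEquivRange.symm.toLinearMap
  have hh₁ : ∀ x : Fin n → ℂ, ∀ hx, h₁ ⟨f x, hx⟩ = f (u x) := by
    intro x hx
    show ((LinearMap.ker f).liftQ (f.comp u) hkerA) (f.quotKerEquivRange.symm ⟨f x, hx⟩) = f (u x)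
    rw [LinearMap.quotKerEquivRange_symm_apply_image]
    rfl
  have hh₂ : ∀ x : Fin n → ℂ, ∀ hx, h₂ ⟨g x, hx⟩ = g (u x) := by
    intro x hx
    show ((LinearMap.ker g).liftQ (g.comp u) hkerB) (g.quotKerEquivRange.symm ⟨g x, hx⟩) = g (u x)
    rw [LinearMap.quotKerEquivRange_symm_apply_image]
    rfl
  let pf := Submodule.linearProjOfIsCompl _ _ hcompl
  let pg := Submodule.linearProjOfIsCompl _ _ hcompl.symm
  let c : (Fin n → ℂ) →ₗ[ℂ] (Fin n → ℂ) := h₁.comp pf + h₂.comp pg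
  have hcf : ∀ x, c (f x) = f (u x) := by
    intro x
    have hmf : f x ∈ LinearMap.range f := ⟨x, rfl⟩
    have e1 : pf (f x) = ⟨f x, hmf⟩ := Submodule.linearProjOfIsCompl_apply_left hcompl ⟨f x, hmf⟩
    have e2 : pg (f x) = 0 :=
      (Submodule.linearProjOfIsCompl_apply_eq_zero_iff hcompl.symm).mpr hmf
    show h₁ (pf (f x)) + h₂ (pg (f x)) = f (u x)
    rw [e1, e2, map_zero, add_zero, hh₁]
  have hcg : ∀ x, c (g x) = g (u x) := by
    intro x
    have hmg : g x ∈ LinearMap.range g := ⟨x, rfl⟩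
    have e1 : pg (g x) = ⟨g x, hmg⟩ :=
      Submodule.linearProjOfIsCompl_apply_left hcompl.symm ⟨g x, hmg⟩
    have e2 : pf (g x) = 0 :=
      (Submodule.linearProjOfIsCompl_apply_eq_zero_iff hcompl).mpr hmg
    show h₁ (pf (g x)) + h₂ (pg (g x)) = g (u x)
    rw [e1, e2, map_zero, zero_add, hh₂]
  -- c is surjective
  have hcsurj : Function.Surjective c := by
    have hr : LinearMap.range c = ⊤ := by
      rw [← top_le_iff, ← hsup, sup_le_iff]
      constructor
      · rintro x ⟨v, rfl⟩
        obtain ⟨w, hw⟩ := husurj v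
        exact ⟨f w, by rw [hcf, hw]⟩
      · rintro x ⟨v, rfl⟩
        obtain ⟨w, hw⟩ := husurj v
        exact ⟨g w, by rw [hcg, hw]⟩
    exact LinearMap.range_eq_top.mp hr
  have hcinj : Function.Injective c :=
    LinearMap.injective_iff_surjective.mpr hcsurj
  let ce : (Fin n → ℂ) ≃ₗ[ℂ] (Fin n → ℂ) := LinearEquiv.ofBijective c ⟨hcinj, hcsurj⟩
  have hC : (LinearMap.toMatrix' c).mulVecLin = c := by
    rw [← Matrix.toLin'_apply']
    exact Matrix.toLin'_toMatrix' c
  refine ⟨LinearMap.toMatrix' c, ?_, ?_, ?_⟩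
  · rw [Matrix.isUnit_iff_isUnit_det, LinearMap.det_toMatrix' c]
    exact LinearEquiv.isUnit_det' ce
  · have hmv : (A * U).mulVecLin = ((LinearMap.toMatrix' c) * A).mulVecLin := by
      rw [Matrix.mulVecLin_mul, Matrix.mulVecLin_mul, hC]
      exact LinearMap.ext fun x => (hcf x).symm
    exact Matrix.toLin'.injective
      (by rw [Matrix.toLin'_apply', Matrix.toLin'_apply']; exact hmv)
  · have hmv : (B * U).mulVecLin = ((LinearMap.toMatrix' c) * B).mulVecLin := by
      rw [Matrix.mulVecLin_mul, Matrix.mulVecLin_mul, hC]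
      exact LinearMap.ext fun x => (hcg x).symm
    exact Matrix.toLin'.injective
      (by rw [Matrix.toLin'_apply', Matrix.toLin'_apply']; exact hmv)
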